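/- Let K be a field, σ a finite type, A = MvPolynomial σ K the polynomial algebra in variables indexed by σ, and V ⊆ A the K-span of the variables (the homogeneous linear forms). Let L be a Lie algebra over K and D : L → Der_K(A) a Lie algebra homomorphism (so D⁅x, y⁆ = D x ∘ D y − D y ∘ D x) such that each derivation D x maps V into V. Suppose p, q ∈ A with q ≠ 0 satisfy (D x p) * q = p * (D x q) for all x ∈ L (i.e. the rational function p/q is L-invariant). Then there exist a K-linear map λ : L → K and polynomials p', q' ∈ A with q' ≠ 0 such that p * q' = q * p', and D x p' = λ(x) • p' and D x q' = λ(x) • q' for all x ∈ L (i.e. p/q is a quotient of two λ-semi-invariants of the same weight λ). -/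

import Mathlib

open MvPolynomial

private lemma top_component_ne_zero {K σ : Type*} [CommSemiring K] (φ : MvPolynomial σ K)
    (h : φ ≠ 0) : homogeneousComponent φ.totalDegree φ ≠ 0 := by
  obtain ⟨s, hs, hdeg⟩ := Finset.exists_mem_eq_sup φ.support (support_nonempty.mpr h)
    (fun s => s.sum fun _ e => e)
  intro h0
  have hc : coeff s (homogeneousComponent φ.totalDegree φ) = coeff s φ := by
    rw [coeff_homogeneousComponent, if_pos]
    rw [totalDegree, hdeg]; rfl
  rw [h0, coeff_zero] at hc
  exact (MvPolynomial.mem_support_iff.mp hs) hc.symm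

private lemma totalDegree_mul_eq' {K σ : Type*} [CommRing K] [IsDomain K]
    {a b : MvPolynomial σ K} (ha : a ≠ 0) (hb : b ≠ 0) :
    (a * b).totalDegree = a.totalDegree + b.totalDegree := by
  refine le_antisymm (totalDegree_mul a b) ?_
  by_contra hlt
  push_neg at hlt
  have hc : homogeneousComponent (a.totalDegree + b.totalDegree) (a * b) = 0 :=
    homogeneousComponent_eq_zero _ _ hlt
  set m := a.totalDegree with hm
  set n := b.totalDegree with hn
  have expand : a * b = (∑ i ∈ Finset.range (m + 1), homogeneousComponent i a) *
      (∑ j ∈ Finset.range (n + 1), homogeneousComponent j b) := by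
    conv_lhs => rw [← sum_homogeneousComponent a, ← sum_homogeneousComponent b]
  have key : homogeneousComponent (m + n) (a * b)
      = homogeneousComponent m a * homogeneousComponent n b := by
    rw [expand, Finset.sum_mul_sum, map_sum]
    rw [Finset.sum_eq_single m]
    · rw [map_sum, Finset.sum_eq_single n]
      · rw [homogeneousComponent_of_mem ((mem_homogeneousSubmodule _ _).mpr
          ((homogeneousComponent_isHomogeneous m a).mul
            (homogeneousComponent_isHomogeneous n b))), if_pos rfl]
      · intro j hj hne
        rw [Finset.mem_range] at hj
        rw [homogeneousComponent_of_mem ((mem_homogeneousSubmodule _ _).mpr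
          ((homogeneousComponent_isHomogeneous m a).mul
            (homogeneousComponent_isHomogeneous j b))), if_neg (show ¬ (m + n = m + j) by omega)]
      · intro habs
        exact absurd (Finset.self_mem_range_succ _) habs
    · intro i hi hne
      rw [Finset.mem_range] at hi
      rw [map_sum, Finset.sum_eq_zero]
      intro j hj
      rw [Finset.mem_range] at hj
      rw [homogeneousComponent_of_mem ((mem_homogeneousSubmodule _ _).mpr
        ((homogeneousComponent_isHomogeneous i a).mul
          (homogeneousComponent_isHomogeneous j b))), if_neg (show ¬ (m + n = i + j) by omega)]
    · intro habs
      exact absurd (Finset.self_mem_range_succ _) habs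
  rw [key] at hc
  exact mul_ne_zero (top_component_ne_zero a ha) (top_component_ne_zero b hb) hc

private lemma span_X_totalDegree_le {K σ : Type*} [CommSemiring K] {v : MvPolynomial σ K}
    (hv : v ∈ Submodule.span K (Set.range (X : σ → MvPolynomial σ K))) :
    v.totalDegree ≤ 1 := by
  induction hv using Submodule.span_induction with
  | mem x hx =>
    obtain ⟨i, rfl⟩ := hx
    show ((monomial (Finsupp.single i 1)) (1 : K)).totalDegree ≤ 1
    exact (totalDegree_monomial_le _ _).trans (by simp)
  | zero => simp
  | add x y _ _ hx hy => exact (totalDegree_add x y).trans (max_le hx hy)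
  | smul a x _ hx => exact (totalDegree_smul_le a x).trans hx

private lemma deriv_monomial_totalDegree_le {K σ : Type*} [CommRing K]
    (d : Derivation K (MvPolynomial σ K) (MvPolynomial σ K))
    (hd : ∀ i : σ, (d (X i)).totalDegree ≤ 1) (s : σ →₀ ℕ) :
    ∀ a : K, (d (monomial s a)).totalDegree ≤ s.sum fun _ e => e := by
  induction s using Finsupp.induction with
  | zero =>
    intro a
    rw [monomial_zero', ← MvPolynomial.algebraMap_eq, Derivation.map_algebraMap]
    simp
  | single_add i b t hit hb ih =>
    intro a
    classical
    rw [monomial_single_add, Derivation.leibniz, Derivation.leibniz_pow]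
    have hsum : ((Finsupp.single i b + t).sum fun _ e => e) = b + t.sum fun _ e => e := by
      rw [Finsupp.sum_add_index (by simp) (by intros; rfl), Finsupp.sum_single_index rfl]
    rw [hsum]
    refine (totalDegree_add _ _).trans (max_le ?_ ?_)
    · -- X i ^ b • d (monomial t a)
      rw [smul_eq_mul]
      refine (totalDegree_mul _ _).trans ?_
      have h1 : (X i ^ b : MvPolynomial σ K).totalDegree ≤ b := by
        refine (totalDegree_pow _ _).trans ?_
        have : (X i : MvPolynomial σ K).totalDegree ≤ 1 := by
          show ((monomial (Finsupp.single i 1)) (1 : K)).totalDegree ≤ 1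
          exact (totalDegree_monomial_le _ _).trans (by simp)
        calc b * (X i : MvPolynomial σ K).totalDegree ≤ b * 1 := by
              exact Nat.mul_le_mul_left b this
          _ = b := by omega
      exact add_le_add h1 (ih a)
    · -- monomial t a • (b • X i ^ (b-1) • d (X i))
      rw [smul_eq_mul]
      have hm : ((monomial t) a).totalDegree ≤ t.sum fun _ e => e := by
        exact totalDegree_monomial_le t a
      have hB : ((b : ℕ) • ((X i ^ (b - 1) : MvPolynomial σ K) • d (X i))).totalDegree ≤ b := by
        rw [nsmul_eq_mul, smul_eq_mul]
        refine (totalDegree_mul _ _).trans ?_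
        rw [← map_natCast (C : K →+* MvPolynomial σ K) b, totalDegree_C, zero_add]
        refine (totalDegree_mul _ _).trans ?_
        have h2 : (X i ^ (b - 1) : MvPolynomial σ K).totalDegree ≤ b - 1 := by
          refine (totalDegree_pow _ _).trans ?_
          have hX1 : (X i : MvPolynomial σ K).totalDegree ≤ 1 := by
            show ((monomial (Finsupp.single i 1)) (1 : K)).totalDegree ≤ 1
            exact (totalDegree_monomial_le _ _).trans (by simp)
          calc (b - 1) * (X i : MvPolynomial σ K).totalDegree ≤ (b - 1) * 1 :=
                Nat.mul_le_mul_left _ hX1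
            _ = b - 1 := by omega
        have h3 := hd i
        omega
      exact (totalDegree_mul _ _).trans (by omega)

private lemma deriv_totalDegree_le {K σ : Type*} [CommRing K]
    (d : Derivation K (MvPolynomial σ K) (MvPolynomial σ K))
    (hd : ∀ i : σ, (d (X i)).totalDegree ≤ 1) (r : MvPolynomial σ K) :
    (d r).totalDegree ≤ r.totalDegree := by
  conv_lhs => rw [r.as_sum]
  rw [map_sum]
  refine (totalDegree_finset_sum _ _).trans (Finset.sup_le fun s hs => ?_)
  exact (deriv_monomial_totalDegree_le d hd s _).trans (le_totalDegree hs)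

private lemma eq_C_of_mul_totalDegree_le {K σ : Type*} [CommRing K] [IsDomain K]
    {q c : MvPolynomial σ K} (hq : q ≠ 0) (h : (q * c).totalDegree ≤ q.totalDegree) :
    ∃ k : K, c = C k := by
  rcases eq_or_ne c 0 with rfl | hc
  · exact ⟨0, by simp⟩
  have heq : (q * c).totalDegree = q.totalDegree + c.totalDegree := totalDegree_mul_eq' hq hc
  have hc0 : c.totalDegree = 0 := by omega
  have hsum := sum_homogeneousComponent c
  rw [hc0, Finset.range_one, Finset.sum_singleton] at hsum
  refine ⟨coeff 0 c, ?_⟩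
  conv_lhs => rw [← hsum, homogeneousComponent_zero]

/-- Let `A = MvPolynomial σ K`, `V` the span of the variables, `L` a Lie algebra acting on
`A` by derivations preserving `V`.  Any `L`-invariant rational function `p/q` is a quotient
of two semi-invariant polynomials of the same weight `λ`. -/
theorem invariant_rational_eq_quotient_of_semiInvariants
    {K σ L : Type*} [Field K] [Finite σ] [LieRing L] [LieAlgebra K L]
    (D : L →ₗ⁅K⁆ Derivation K (MvPolynomial σ K) (MvPolynomial σ K))
    (hV : ∀ x : L,
      ∀ v ∈ Submodule.span K (Set.range (MvPolynomial.X : σ → MvPolynomial σ K)),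
        D x v ∈ Submodule.span K (Set.range (MvPolynomial.X : σ → MvPolynomial σ K)))
    (p q : MvPolynomial σ K) (hq : q ≠ 0)
    (hinv : ∀ x : L, (D x p) * q = p * (D x q)) :
    ∃ (lam : L →ₗ[K] K) (p' q' : MvPolynomial σ K), q' ≠ 0 ∧ p * q' = q * p' ∧
      ∀ x : L, D x p' = lam x • p' ∧ D x q' = lam x • q' := by
  classical
  rcases eq_or_ne p 0 with rfl | hp0
  · exact ⟨0, 0, 1, one_ne_zero, by simp, fun x => by
      simp [Derivation.map_one_eq_zero]⟩
  letI : GCDMonoid (MvPolynomial σ K) := UniqueFactorizationMonoid.toGCDMonoid _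
  obtain ⟨p', hp⟩ := gcd_dvd_left p q
  obtain ⟨q', hqe⟩ := gcd_dvd_right p q
  set g := gcd p q with hg
  have hgne : g ≠ 0 := fun h => hq ((gcd_eq_zero_iff p q).mp h).2
  have hp'ne : p' ≠ 0 := fun h => hp0 (by rw [hp, h, mul_zero])
  have hq'ne : q' ≠ 0 := fun h => hq (by rw [hqe, h, mul_zero])
  have hrel : IsRelPrime p' q' := by
    rw [← gcd_isUnit_iff_isRelPrime]
    have hassoc := gcd_mul_left' g p' q'
    rw [← hp, ← hqe] at hassoc
    obtain ⟨u, hu⟩ := hassoc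
    have hueq : (u : MvPolynomial σ K) = gcd p' q' := mul_left_cancel₀ hgne hu
    rw [← hueq]
    exact u.isUnit
  have hinv' : ∀ x : L, D x p' * q' = p' * D x q' := by
    intro x
    have h1 := hinv x
    rw [hp, hqe, Derivation.leibniz, Derivation.leibniz] at h1
    simp only [smul_eq_mul] at h1
    have h2 : (g * g) * (D x p' * q') = (g * g) * (p' * D x q') := by
      linear_combination h1
    exact mul_left_cancel₀ (mul_ne_zero hgne hgne) h2
  have hdegle : ∀ (x : L) (r : MvPolynomial σ K),
      (D x r).totalDegree ≤ r.totalDegree := fun x r =>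
    deriv_totalDegree_le (D x)
      (fun i => span_X_totalDegree_le (hV x _ (Submodule.subset_span ⟨i, rfl⟩))) r
  have key : ∀ x : L, ∃ k : K, D x p' = C k * p' ∧ D x q' = C k * q' := by
    intro x
    have hdvd_p : p' ∣ D x p' := by
      refine hrel.dvd_of_dvd_mul_right (z := q') ?_
      rw [hinv' x]
      exact dvd_mul_right _ _
    have hdvd_q : q' ∣ D x q' := by
      refine hrel.symm.dvd_of_dvd_mul_left (y := p') ?_
      rw [← hinv' x]
      exact dvd_mul_left _ _
    obtain ⟨c, hcq⟩ := hdvd_q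
    obtain ⟨k, rfl⟩ := eq_C_of_mul_totalDegree_le hq'ne
      (by rw [← hcq]; exact hdegle x q')
    refine ⟨k, ?_, by rw [hcq, mul_comm]⟩
    obtain ⟨c', hcp⟩ := hdvd_p
    have h3 : p' * (q' * c') = p' * (q' * C k) := by
      have h4 := hinv' x
      rw [hcp, hcq] at h4
      linear_combination h4
    have hc' : c' = C k := mul_left_cancel₀ hq'ne (mul_left_cancel₀ hp'ne h3)
    rw [hcp, hc', mul_comm]
  obtain ⟨s₀, hs₀⟩ := support_nonempty.mpr hq'ne
  have hc₀ : coeff s₀ q' ≠ 0 := mem_support_iff.mp hs₀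
  refine ⟨⟨⟨fun x => coeff s₀ (D x q') * (coeff s₀ q')⁻¹, ?_⟩, ?_⟩, p', q', hq'ne,
    by rw [hp, hqe]; ring, ?_⟩
  · intro x y
    rw [map_add D, Derivation.add_apply, coeff_add, add_mul]
  · intro a x
    dsimp only
    rw [map_smul D, Derivation.smul_apply, coeff_smul, smul_eq_mul, RingHom.id_apply, smul_eq_mul]
    ring
  · intro x
    obtain ⟨k, h1, h2⟩ := key x
    have hk : coeff s₀ (D x q') * (coeff s₀ q')⁻¹ = k := by
      rw [h2, coeff_C_mul]
      field_simp
    constructor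
    · show D x p' = (coeff s₀ (D x q') * (coeff s₀ q')⁻¹) • p'
      rw [hk, smul_eq_C_mul, h1]
    · show D x q' = (coeff s₀ (D x q') * (coeff s₀ q')⁻¹) • q'
      rw [hk, smul_eq_C_mul, h2]
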